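/- Let A and B be n×n real positive definite matrices whose diagonal entries are all equal to 1. Then the condition number of the Hadamard product satisfies κ(A*B) ≤ κ(B), where κ(M) = σ_max(M)/σ_min(M). -/

import Mathlib

open scoped BigOperators
open MeasureTheory ProbabilityTheory Matrix

noncomputable def _root_.enorm {n : ℕ} (v : Fin n → ℝ) : ℝ :=
  ‖(WithLp.equiv 2 (Fin n → ℝ)).symm v‖

noncomputable def sMax {m n : ℕ} (A : Matrix (Fin m) (Fin n) ℝ) : ℝ :=
  ⨆ x : {x : Fin n → ℝ // _root_.enorm x = 1}, _root_.enorm (A.mulVec x.1)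

noncomputable def sMin {m n : ℕ} (A : Matrix (Fin m) (Fin n) ℝ) : ℝ :=
  ⨅ x : {x : Fin n → ℝ // _root_.enorm x = 1}, _root_.enorm (A.mulVec x.1)

namespace CondAux

open Matrix

variable {n : ℕ}

lemma enorm_eq_sqrt (v : Fin n → ℝ) : _root_.enorm v = Real.sqrt (v ⬝ᵥ v) := by
  rw [_root_.enorm, EuclideanSpace.norm_eq]
  congr 1
  refine Finset.sum_congr rfl fun i _ => ?_
  simp [Real.norm_eq_abs, sq_abs, sq]

lemma dot_self_nonneg (v : Fin n → ℝ) : 0 ≤ v ⬝ᵥ v :=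
  Finset.sum_nonneg fun i _ => mul_self_nonneg _

lemma enorm_nonneg (v : Fin n → ℝ) : 0 ≤ _root_.enorm v := by
  rw [enorm_eq_sqrt]; exact Real.sqrt_nonneg _

lemma dot_self_eq_one {v : Fin n → ℝ} (hv : _root_.enorm v = 1) : v ⬝ᵥ v = 1 := by
  rw [enorm_eq_sqrt, Real.sqrt_eq_one] at hv
  exact hv

lemma dot_mulVec_self {U : Matrix (Fin n) (Fin n) ℝ} (hU : Uᵀ * U = 1) (y : Fin n → ℝ) :
    (U *ᵥ y) ⬝ᵥ (U *ᵥ y) = y ⬝ᵥ y := by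
  rw [dotProduct_mulVec, ← vecMul_transpose, vecMul_vecMul, hU, vecMul_one]

section spectral

variable {M : Matrix (Fin n) (Fin n) ℝ} (hM : M.IsHermitian)

local notation "U" => (Matrix.IsHermitian.eigenvectorUnitary hM : Matrix (Fin n) (Fin n) ℝ)

lemma star_U : star U = (U)ᵀ := by
  rw [star_eq_conjTranspose, conjTranspose_eq_transpose_of_trivial]

lemma UtU : (U)ᵀ * U = 1 := by
  rw [← star_U]
  exact (Matrix.mem_unitaryGroup_iff').mp (Matrix.IsHermitian.eigenvectorUnitary hM).2

lemma UUt : U * (U)ᵀ = 1 := by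
  rw [← star_U]
  exact (Matrix.mem_unitaryGroup_iff).mp (Matrix.IsHermitian.eigenvectorUnitary hM).2

lemma spectral_theorem_real : M = U * Matrix.diagonal hM.eigenvalues * (U)ᵀ := by
  conv_lhs => rw [hM.spectral_theorem]
  rw [Unitary.conjStarAlgAut_apply, star_U]
  congr 2

/-- coordinates of x in the eigenbasis -/
noncomputable def coord (x : Fin n → ℝ) : Fin n → ℝ := (U)ᵀ *ᵥ x

lemma coord_dot (x : Fin n → ℝ) : (coord hM x) ⬝ᵥ (coord hM x) = x ⬝ᵥ x := by
  rw [coord]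
  exact dot_mulVec_self (by rw [transpose_transpose]; exact UUt hM) x

lemma mulVec_eq (x : Fin n → ℝ) :
    M *ᵥ x = U *ᵥ (Matrix.diagonal hM.eigenvalues *ᵥ coord hM x) := by
  conv_lhs => rw [spectral_theorem_real hM]
  rw [coord, ← mulVec_mulVec, ← mulVec_mulVec]

lemma spectral_dot (x : Fin n → ℝ) :
    x ⬝ᵥ (M *ᵥ x) = ∑ i, hM.eigenvalues i * (coord hM x i) ^ 2 := by
  rw [mulVec_eq hM, dotProduct_mulVec, ← mulVec_transpose, ← coord]
  simp only [dotProduct, mulVec_diagonal]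
  exact Finset.sum_congr rfl fun i _ => by ring

lemma spectral_dot2 (x : Fin n → ℝ) :
    (M *ᵥ x) ⬝ᵥ (M *ᵥ x) = ∑ i, (hM.eigenvalues i) ^ 2 * (coord hM x i) ^ 2 := by
  rw [mulVec_eq hM, dot_mulVec_self (UtU hM)]
  simp only [dotProduct, mulVec_diagonal]
  exact Finset.sum_congr rfl fun i _ => by ring

lemma spectral_norm (x : Fin n → ℝ) : x ⬝ᵥ x = ∑ i, (coord hM x i) ^ 2 := by
  rw [← coord_dot hM x]
  simp only [dotProduct]
  exact Finset.sum_congr rfl fun i _ => by ring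

/-- entries via spectral decomposition -/
lemma entry_spectral (i j : Fin n) :
    M i j = ∑ k, hM.eigenvalues k * (U i k * U j k) := by
  conv_lhs => rw [spectral_theorem_real hM]
  rw [Matrix.mul_apply]
  refine Finset.sum_congr rfl fun k _ => ?_
  rw [Matrix.mul_diagonal, transpose_apply]
  ring

lemma eigenvector_dot_self (i : Fin n) :
    (⇑(hM.eigenvectorBasis i) : Fin n → ℝ) ⬝ᵥ ⇑(hM.eigenvectorBasis i) = 1 := by
  have h := hM.eigenvectorBasis.orthonormal.1 i
  have h2 : (inner ℝ (hM.eigenvectorBasis i) (hM.eigenvectorBasis i) : ℝ) = 1 := by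
    rw [real_inner_self_eq_norm_sq, h]; norm_num
  rw [EuclideanSpace.inner_eq_star_dotProduct] at h2
  simpa using h2

lemma enorm_eigenvector (i : Fin n) :
    _root_.enorm (⇑(hM.eigenvectorBasis i) : Fin n → ℝ) = 1 := by
  rw [enorm_eq_sqrt, eigenvector_dot_self hM, Real.sqrt_one]

lemma eigenvalue_dot (i : Fin n) :
    hM.eigenvalues i
      = (⇑(hM.eigenvectorBasis i) : Fin n → ℝ) ⬝ᵥ (M *ᵥ ⇑(hM.eigenvectorBasis i)) := by
  have := hM.eigenvalues_eq i
  simpa using this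

end spectral

/-- Schur product theorem -/
lemma schur {A N : Matrix (Fin n) (Fin n) ℝ} (hA : A.PosSemidef) (hN : N.PosSemidef) :
    (A.hadamard N).PosSemidef := by
  rw [posSemidef_iff_dotProduct_mulVec]
  constructor
  · have hAH := hA.1
    have hNH := hN.1
    ext i j
    simp only [conjTranspose_apply, hadamard_apply, star_trivial]
    rw [← hAH.apply, ← hNH.apply]
    simp
  · intro x
    set U : Matrix (Fin n) (Fin n) ℝ :=
      (Matrix.IsHermitian.eigenvectorUnitary hA.1 : Matrix (Fin n) (Fin n) ℝ) with hU
    have hL : star x ⬝ᵥ ((A.hadamard N) *ᵥ x)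
        = ∑ i, ∑ j, ∑ k, hA.1.eigenvalues k * x i * U i k * N i j * x j * U j k := by
      simp only [star_trivial, dotProduct, mulVec, hadamard_apply, entry_spectral hA.1,
        Finset.sum_mul, Finset.mul_sum]
      refine Finset.sum_congr rfl fun i _ => Finset.sum_congr rfl fun j _ =>
        Finset.sum_congr rfl fun k _ => by ring
    have hR : ∑ k, hA.1.eigenvalues k *
            ((fun i => x i * U i k) ⬝ᵥ (N *ᵥ fun i => x i * U i k))
        = ∑ i, ∑ j, ∑ k, hA.1.eigenvalues k * x i * U i k * N i j * x j * U j k := by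
      simp only [dotProduct, mulVec, Finset.mul_sum, Finset.sum_mul]
      rw [Finset.sum_comm]
      refine Finset.sum_congr rfl fun i _ => ?_
      rw [Finset.sum_comm]
      refine Finset.sum_congr rfl fun j _ => Finset.sum_congr rfl fun k _ => by ring
    rw [hL, ← hR]
    refine Finset.sum_nonneg fun k _ => mul_nonneg (hA.eigenvalues_nonneg k) ?_
    have := hN.dotProduct_mulVec_nonneg (fun i => x i * U i k)
    simpa using this

lemma smul_one_herm (c : ℝ) :
    ((c • (1 : Matrix (Fin n) (Fin n) ℝ))).IsHermitian := by
  ext i j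
  simp [Matrix.conjTranspose_apply, Matrix.one_apply, eq_comm]

lemma quad_eq (M : Matrix (Fin n) (Fin n) ℝ) (c : ℝ) (x : Fin n → ℝ) :
    x ⬝ᵥ ((c • (1 : Matrix (Fin n) (Fin n) ℝ) - M) *ᵥ x) = c * (x ⬝ᵥ x) - x ⬝ᵥ (M *ᵥ x) := by
  rw [sub_mulVec, dotProduct_sub, smul_mulVec, one_mulVec, dotProduct_smul, smul_eq_mul]

lemma quad_eq' (M : Matrix (Fin n) (Fin n) ℝ) (c : ℝ) (x : Fin n → ℝ) :
    x ⬝ᵥ ((M - c • (1 : Matrix (Fin n) (Fin n) ℝ)) *ᵥ x) = x ⬝ᵥ (M *ᵥ x) - c * (x ⬝ᵥ x) := by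
  rw [sub_mulVec, dotProduct_sub, smul_mulVec, one_mulVec, dotProduct_smul, smul_eq_mul]

/-- eigenvalue upper bound from PSD shift -/
lemma eig_le {M : Matrix (Fin n) (Fin n) ℝ} (hM : M.IsHermitian) {c : ℝ}
    (h : (c • (1 : Matrix (Fin n) (Fin n) ℝ) - M).PosSemidef) (i : Fin n) :
    hM.eigenvalues i ≤ c := by
  have h2 := h.dotProduct_mulVec_nonneg (⇑(hM.eigenvectorBasis i))
  rw [star_trivial, quad_eq, eigenvector_dot_self hM, ← eigenvalue_dot hM, mul_one] at h2
  linarith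

/-- eigenvalue lower bound from PSD shift -/
lemma le_eig {M : Matrix (Fin n) (Fin n) ℝ} (hM : M.IsHermitian) {c : ℝ}
    (h : (M - c • (1 : Matrix (Fin n) (Fin n) ℝ)).PosSemidef) (i : Fin n) :
    c ≤ hM.eigenvalues i := by
  have h2 := h.dotProduct_mulVec_nonneg (⇑(hM.eigenvectorBasis i))
  rw [star_trivial, quad_eq', eigenvector_dot_self hM, ← eigenvalue_dot hM, mul_one] at h2
  linarith

/-- PSD of shift from eigenvalue bounds -/
lemma psd_shift_of_le {M : Matrix (Fin n) (Fin n) ℝ} (hM : M.IsHermitian) {c : ℝ}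
    (h : ∀ i, hM.eigenvalues i ≤ c) :
    (c • (1 : Matrix (Fin n) (Fin n) ℝ) - M).PosSemidef := by
  rw [posSemidef_iff_dotProduct_mulVec]
  constructor
  · exact (smul_one_herm c).sub hM
  · intro x
    rw [star_trivial, quad_eq, spectral_dot hM, spectral_norm hM, Finset.mul_sum,
      ← Finset.sum_sub_distrib]
    refine Finset.sum_nonneg fun i _ => ?_
    have := sq_nonneg (coord hM x i)
    nlinarith [h i]

lemma psd_shift_of_ge {M : Matrix (Fin n) (Fin n) ℝ} (hM : M.IsHermitian) {c : ℝ}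
    (h : ∀ i, c ≤ hM.eigenvalues i) :
    (M - c • (1 : Matrix (Fin n) (Fin n) ℝ)).PosSemidef := by
  rw [posSemidef_iff_dotProduct_mulVec]
  constructor
  · exact hM.sub (smul_one_herm c)
  · intro x
    rw [star_trivial, quad_eq', spectral_dot hM, spectral_norm hM, Finset.mul_sum,
      ← Finset.sum_sub_distrib]
    refine Finset.sum_nonneg fun i _ => ?_
    have := sq_nonneg (coord hM x i)
    nlinarith [h i]

/-- For a symmetric matrix with eigenvalues in `[a, c]`, `0 ≤ a`, norm of `M x` lies in
`[a, c]` for unit `x`. -/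
lemma norm_mulVec_le {M : Matrix (Fin n) (Fin n) ℝ} (hM : M.IsHermitian) {a c : ℝ}
    (ha : 0 ≤ a) (h1 : ∀ i, a ≤ hM.eigenvalues i) (h2 : ∀ i, hM.eigenvalues i ≤ c)
    {x : Fin n → ℝ} (hx : _root_.enorm x = 1) :
    a ≤ _root_.enorm (M *ᵥ x) ∧ _root_.enorm (M *ᵥ x) ≤ c := by
  have hc : 0 ≤ c := by
    rcases isEmpty_or_nonempty (Fin n) with h | h
    · exfalso
      have := dot_self_eq_one hx
      simp [dotProduct] at this
    · obtain ⟨i⟩ := h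
      exact ha.trans ((h1 i).trans (h2 i))
  have hxx : x ⬝ᵥ x = 1 := dot_self_eq_one hx
  have hsum : ∑ i, (coord hM x i) ^ 2 = 1 := by rw [← spectral_norm hM, hxx]
  have hdot2 := spectral_dot2 hM x
  have hub : (M *ᵥ x) ⬝ᵥ (M *ᵥ x) ≤ c ^ 2 := by
    rw [hdot2]
    calc ∑ i, (hM.eigenvalues i) ^ 2 * (coord hM x i) ^ 2
        ≤ ∑ i, c ^ 2 * (coord hM x i) ^ 2 := by
          refine Finset.sum_le_sum fun i _ =>
            mul_le_mul_of_nonneg_right ?_ (sq_nonneg _)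
          exact pow_le_pow_left₀ (ha.trans (h1 i)) (h2 i) 2
      _ = c ^ 2 := by rw [← Finset.mul_sum, hsum, mul_one]
  have hlb : a ^ 2 ≤ (M *ᵥ x) ⬝ᵥ (M *ᵥ x) := by
    rw [hdot2]
    calc a ^ 2 = ∑ i, a ^ 2 * (coord hM x i) ^ 2 := by rw [← Finset.mul_sum, hsum, mul_one]
      _ ≤ ∑ i, (hM.eigenvalues i) ^ 2 * (coord hM x i) ^ 2 := by
          refine Finset.sum_le_sum fun i _ =>
            mul_le_mul_of_nonneg_right ?_ (sq_nonneg _)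
          exact pow_le_pow_left₀ ha (h1 i) 2
  constructor
  · rw [enorm_eq_sqrt]
    calc a = Real.sqrt (a ^ 2) := (Real.sqrt_sq ha).symm
      _ ≤ _ := Real.sqrt_le_sqrt hlb
  · rw [enorm_eq_sqrt]
    calc Real.sqrt ((M *ᵥ x) ⬝ᵥ (M *ᵥ x)) ≤ Real.sqrt (c ^ 2) := Real.sqrt_le_sqrt hub
      _ = c := Real.sqrt_sq hc

lemma enorm_smul (a : ℝ) (v : Fin n → ℝ) : _root_.enorm (a • v) = |a| * _root_.enorm v := by
  rw [enorm_eq_sqrt, enorm_eq_sqrt, smul_dotProduct, dotProduct_smul, smul_eq_mul, smul_eq_mul,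
    ← mul_assoc, ← sq]
  rw [Real.sqrt_mul (sq_nonneg a), Real.sqrt_sq_eq_abs]

end CondAux

open CondAux

theorem stmt_1 {n : ℕ} (A B : Matrix (Fin n) (Fin n) ℝ)
    (hA : A.PosDef) (hB : B.PosDef)
    (hAd : ∀ i, A i i = 1) (hBd : ∀ i, B i i = 1) :
    sMax (A.hadamard B) / sMin (A.hadamard B) ≤ sMax B / sMin B := by
  rcases Nat.eq_zero_or_pos n with hn | hn
  · subst hn
    haveI : IsEmpty {x : Fin 0 → ℝ // _root_.enorm x = 1} := by
      constructor
      rintro ⟨x, hx⟩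
      have := dot_self_eq_one hx
      simp [dotProduct] at this
    simp [sMax, sMin]
  · haveI : NeZero n := ⟨hn.ne'⟩
    have hBH : B.IsHermitian := hB.1
    obtain ⟨i₁, -, hmax⟩ := Finset.exists_max_image Finset.univ hBH.eigenvalues
      ⟨⟨0, hn⟩, Finset.mem_univ _⟩
    obtain ⟨i₀, -, hmin⟩ := Finset.exists_min_image Finset.univ hBH.eigenvalues
      ⟨⟨0, hn⟩, Finset.mem_univ _⟩
    set lam := hBH.eigenvalues i₀ with hlam_def
    set mu := hBH.eigenvalues i₁ with hmu_def
    have hlam_pos : 0 < lam := hB.eigenvalues_pos i₀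
    have hP1 : (B - lam • (1 : Matrix (Fin n) (Fin n) ℝ)).PosSemidef :=
      psd_shift_of_ge hBH fun i => hmin i (Finset.mem_univ i)
    have hP2 : (mu • (1 : Matrix (Fin n) (Fin n) ℝ) - B).PosSemidef :=
      psd_shift_of_le hBH fun i => hmax i (Finset.mem_univ i)
    -- rewrite Hadamard with shifted matrices
    have hrw1 : A.hadamard (B - lam • (1 : Matrix (Fin n) (Fin n) ℝ))
        = A.hadamard B - lam • (1 : Matrix (Fin n) (Fin n) ℝ) := by
      ext i j
      by_cases h : i = j
      · subst h
        simp [Matrix.hadamard_apply, Matrix.one_apply, hAd, mul_sub]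
      · simp [Matrix.hadamard_apply, Matrix.one_apply, h, mul_sub]
    have hrw2 : A.hadamard (mu • (1 : Matrix (Fin n) (Fin n) ℝ) - B)
        = mu • (1 : Matrix (Fin n) (Fin n) ℝ) - A.hadamard B := by
      ext i j
      by_cases h : i = j
      · subst h
        simp [Matrix.hadamard_apply, Matrix.one_apply, hAd, mul_sub]
      · simp [Matrix.hadamard_apply, Matrix.one_apply, h, mul_sub]
    have hC1 : (A.hadamard B - lam • (1 : Matrix (Fin n) (Fin n) ℝ)).PosSemidef := by
      rw [← hrw1]; exact schur hA.posSemidef hP1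
    have hC2 : (mu • (1 : Matrix (Fin n) (Fin n) ℝ) - A.hadamard B).PosSemidef := by
      rw [← hrw2]; exact schur hA.posSemidef hP2
    have hCH : (A.hadamard B).IsHermitian := by
      have := hC1.1.add (smul_one_herm lam)
      simpa using this
    have hCeig_le : ∀ i, hCH.eigenvalues i ≤ mu := eig_le hCH hC2
    have hCeig_ge : ∀ i, lam ≤ hCH.eigenvalues i := le_eig hCH hC1
    -- pointwise bounds
    have hCbounds : ∀ x : {x : Fin n → ℝ // _root_.enorm x = 1},
        lam ≤ _root_.enorm ((A.hadamard B) *ᵥ x.1) ∧ _root_.enorm ((A.hadamard B) *ᵥ x.1) ≤ mu :=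
      fun x => norm_mulVec_le hCH hlam_pos.le hCeig_ge hCeig_le x.2
    have hBbounds : ∀ x : {x : Fin n → ℝ // _root_.enorm x = 1},
        lam ≤ _root_.enorm (B *ᵥ x.1) ∧ _root_.enorm (B *ᵥ x.1) ≤ mu :=
      fun x => norm_mulVec_le hBH hlam_pos.le
        (fun i => hmin i (Finset.mem_univ i)) (fun i => hmax i (Finset.mem_univ i)) x.2
    haveI hne : Nonempty {x : Fin n → ℝ // _root_.enorm x = 1} :=
      ⟨⟨⇑(hBH.eigenvectorBasis i₀), enorm_eigenvector hBH i₀⟩⟩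
    -- sMax C ≤ mu
    have h1 : sMax (A.hadamard B) ≤ mu := ciSup_le fun x => (hCbounds x).2
    -- lam ≤ sMin C
    have h2 : lam ≤ sMin (A.hadamard B) := le_ciInf fun x => (hCbounds x).1
    -- mu ≤ sMax B
    have hBsup_bdd : BddAbove (Set.range fun x : {x : Fin n → ℝ // _root_.enorm x = 1} =>
        _root_.enorm (B *ᵥ x.1)) := by
      refine ⟨mu, ?_⟩
      rintro y ⟨x, rfl⟩
      exact (hBbounds x).2
    have hv1 : _root_.enorm (B *ᵥ ⇑(hBH.eigenvectorBasis i₁)) = mu := by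
      rw [hBH.mulVec_eigenvectorBasis, CondAux.enorm_smul, enorm_eigenvector hBH, mul_one,
        abs_of_pos (hB.eigenvalues_pos i₁)]
    have h3 : mu ≤ sMax B := by
      have := le_ciSup hBsup_bdd
        (⟨⇑(hBH.eigenvectorBasis i₁), enorm_eigenvector hBH i₁⟩ :
          {x : Fin n → ℝ // _root_.enorm x = 1})
      rw [hv1] at this
      exact this
    -- sMin B ≤ lam
    have hBinf_bdd : BddBelow (Set.range fun x : {x : Fin n → ℝ // _root_.enorm x = 1} =>
        _root_.enorm (B *ᵥ x.1)) := by
      refine ⟨0, ?_⟩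
      rintro y ⟨x, rfl⟩
      exact enorm_nonneg _
    have hv0 : _root_.enorm (B *ᵥ ⇑(hBH.eigenvectorBasis i₀)) = lam := by
      rw [hBH.mulVec_eigenvectorBasis, CondAux.enorm_smul, enorm_eigenvector hBH, mul_one,
        abs_of_pos hlam_pos]
    have h4 : sMin B ≤ lam := by
      have := ciInf_le hBinf_bdd
        (⟨⇑(hBH.eigenvectorBasis i₀), enorm_eigenvector hBH i₀⟩ :
          {x : Fin n → ℝ // _root_.enorm x = 1})
      rw [hv0] at this
      exact this
    -- lam ≤ sMin B
    have h5 : lam ≤ sMin B := le_ciInf fun x => (hBbounds x).1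
    have hnum : sMax (A.hadamard B) ≤ sMax B := h1.trans h3
    have hden : sMin B ≤ sMin (A.hadamard B) := h4.trans h2
    have hBmax_nonneg : 0 ≤ sMax B := (hlam_pos.le.trans (hmin i₁ (Finset.mem_univ _))).trans h3
    exact div_le_div₀ hBmax_nonneg hnum (hlam_pos.trans_le h5) hden
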